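/- If G is a flasque inverse system of abelian groups indexed by a directed set of countable cofinality, then lim^1 G = 0; that is, every coherent element of G^{(1)} is trivial. -/

import Mathlib

/-!
Statement 0: For any directed set Λ and Λ-inverse system of abelian groups G,
the composition of consecutive coboundary maps vanishes: δ^{n+1} ∘ δ^n = 0.
-/

universe u v

/-- A `Λ`-inverse system of abelian groups. -/
structure InvSys (Λ : Type u) [Preorder Λ] : Type (max u (v + 1)) where
  G : Λ → Type v
  inst : ∀ a, AddCommGroup (G a)
  p : ∀ {a b : Λ}, a ≤ b → G b →+ G a
  p_refl : ∀ (a : Λ) (h : a ≤ a) (x : G a), p h x = x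
  p_comp : ∀ {a b c : Λ} (hab : a ≤ b) (hbc : b ≤ c) (x : G c),
      p hab (p hbc x) = p (hab.trans hbc) x

attribute [instance] InvSys.inst

/-- `Λ^{(n)}`: the ≤-ordered `(n+1)`-tuples of `Λ`. -/
def Tup (Λ : Type u) [Preorder Λ] (n : ℕ) : Type u :=
  {f : Fin (n + 1) → Λ // Monotone f}

variable {Λ : Type u} [Preorder Λ]

/-- `G^{(n)}`: functions assigning to each tuple `λ̄ ∈ Λ^{(n)}` an element of `G_{λ_0}`. -/
def InvSys.Cochain (S : InvSys.{u, v} Λ) (n : ℕ) : Type max u v :=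
  ∀ t : Tup Λ n, S.G (t.1 0)

instance (S : InvSys.{u, v} Λ) (n : ℕ) : AddCommGroup (S.Cochain n) :=
  inferInstanceAs (AddCommGroup (∀ t : Tup Λ n, S.G (t.1 0)))

/-- The tuple `λ̄^i` obtained by omitting the `i`-th coordinate. -/
def Tup.face {n : ℕ} (t : Tup Λ (n + 1)) (i : Fin (n + 2)) : Tup Λ n :=
  ⟨t.1 ∘ i.succAbove, t.2.comp (Fin.strictMono_succAbove i).monotone⟩

/-- The coboundary map `δ^{n+1} : G^{(n)} → G^{(n+1)}`,
`δ(x)_{λ̄} = Σ_{1≤i≤n+1} (-1)^i x_{λ̄^i} + p^{λ_1}_{λ_0}(x_{λ̄^0})`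
(the `i = 0` term carries the bonding map `p^{λ_1}_{λ_0}`, and for `i ≥ 1` the bonding
map `p^{λ_0}_{λ_0}` is the identity). -/
def InvSys.coboundary (S : InvSys.{u, v} Λ) (n : ℕ) (x : S.Cochain n) : S.Cochain (n + 1) :=
  fun t => ∑ i : Fin (n + 2),
    ((-1 : ℤ) ^ (i : ℕ)) • S.p (t.2 (Fin.zero_le (i.succAbove 0))) (x (t.face i))



section Aux
variable (S : InvSys.{u, v} Λ)

def pairT {a b : Λ} (h : a ≤ b) : Tup Λ 1 :=
  ⟨![a, b], by
    intro i j hij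
    fin_cases i <;> fin_cases j <;>
      first
        | exact le_rfl
        | exact h
        | exact absurd hij (by decide)⟩

def tripleT {a b c : Λ} (hab : a ≤ b) (hbc : b ≤ c) : Tup Λ 2 :=
  ⟨![a, b, c], by
    intro i j hij
    fin_cases i <;> fin_cases j <;>
      first
        | exact le_rfl
        | exact hab
        | exact hbc
        | exact hab.trans hbc
        | exact absurd hij (by decide)⟩

def x2 (x : S.Cochain 1) {a b : Λ} (h : a ≤ b) : S.G a := x (pairT h)

lemma px_congr {a : Λ} {t t' : Tup Λ 1} (ht : t = t')
    (pf1 : a ≤ t.1 0) (pf2 : a ≤ t'.1 0) (x : S.Cochain 1) :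
    S.p pf1 (x t) = S.p pf2 (x t') := by subst ht; rfl

lemma cocyc (x : S.Cochain 1) (hx : S.coboundary 1 x = 0) {a b c : Λ}
    (hab : a ≤ b) (hbc : b ≤ c) :
    x2 S x (hab.trans hbc) = x2 S x hab + S.p hab (x2 S x hbc) := by
  have h := congrFun hx (tripleT hab hbc)
  have e0 : (tripleT hab hbc).face 0 = pairT hbc := by
    apply Subtype.ext; funext i; fin_cases i <;> rfl
  have e1 : (tripleT hab hbc).face (Fin.succ 0) = pairT (hab.trans hbc) := by
    apply Subtype.ext; funext i; fin_cases i <;> rfl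
  have e2 : (tripleT hab hbc).face (Fin.succ 0).succ = pairT hab := by
    apply Subtype.ext; funext i; fin_cases i <;> rfl
  have hz : (0 : S.Cochain 2) (tripleT hab hbc) = 0 := rfl
  simp only [InvSys.coboundary, Fin.sum_univ_succ, Fin.sum_univ_zero,
    hz, Fin.val_zero, pow_zero, one_smul, add_zero] at h
  have E0 : (S.p ((tripleT hab hbc).2 (Fin.zero_le ((0 : Fin (1+2)).succAbove 0))))
      (x ((tripleT hab hbc).face 0)) = S.p hab (x2 S x hbc) :=
    px_congr S e0 _ hab x
  have E1 : (S.p ((tripleT hab hbc).2 (Fin.zero_le ((Fin.succ (0 : Fin (0+1+1))).succAbove 0))))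
      (x ((tripleT hab hbc).face (Fin.succ 0))) = x2 S x (hab.trans hbc) :=
    (px_congr S e1 _ (le_refl a) x).trans (S.p_refl a _ _)
  have E2 : (S.p ((tripleT hab hbc).2 (Fin.zero_le ((Fin.succ (0 : Fin (0+1))).succ.succAbove 0))))
      (x ((tripleT hab hbc).face (Fin.succ (0 : Fin (0+1))).succ)) = x2 S x hab :=
    (px_congr S e2 _ (le_refl a) x).trans (S.p_refl a _ _)
  rw [E0, E1, E2] at h
  norm_num at h
  change (S.p hab (x2 S x hbc) + ((-1 : ℤ) • x2 S x (hab.trans hbc) + (1 : ℤ) • x2 S x hab) : S.G a) = 0 at h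
  rw [← sub_eq_zero, ← neg_eq_zero, ← h]; abel


lemma x2_refl (x : S.Cochain 1) (hx : S.coboundary 1 x = 0) {a : Λ} (h : a ≤ a) :
    x2 S x h = 0 := by
  have h2 := cocyc S x hx h h
  rw [S.p_refl] at h2
  have h3 : x2 S x h + 0 = x2 S x h + x2 S x h := by
    rw [add_zero]; exact h2
  exact (add_left_cancel h3).symm

variable (x : S.Cochain 1) (μ : ℕ → Λ) (hμ : Monotone μ)
  (hfl : ∀ {a b : Λ} (h : a ≤ b), Function.Surjective (S.p h))

noncomputable def yseq : ∀ n : ℕ, S.G (μ n)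
  | 0 => 0
  | n + 1 => (hfl (hμ (Nat.le_succ n)) (yseq n + x2 S x (hμ (Nat.le_succ n)))).choose

lemma yseq_succ (n : ℕ) :
    S.p (hμ (Nat.le_succ n)) (yseq S x μ hμ hfl (n + 1)) =
      yseq S x μ hμ hfl n + x2 S x (hμ (Nat.le_succ n)) :=
  (hfl (hμ (Nat.le_succ n)) _).choose_spec

lemma yseq_proj (hx : S.coboundary 1 x = 0) {i j : ℕ} (hij : i ≤ j) :
    S.p (hμ hij) (yseq S x μ hμ hfl j) = yseq S x μ hμ hfl i + x2 S x (hμ hij) := by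
  induction j, hij using Nat.le_induction with
  | base => rw [S.p_refl, x2_refl S x hx, add_zero]
  | succ j hij IH =>
    calc S.p (hμ (hij.trans (Nat.le_succ j))) (yseq S x μ hμ hfl (j + 1))
        = S.p (hμ hij) (S.p (hμ (Nat.le_succ j)) (yseq S x μ hμ hfl (j + 1))) :=
          (S.p_comp _ _ _).symm
      _ = S.p (hμ hij) (yseq S x μ hμ hfl j + x2 S x (hμ (Nat.le_succ j))) := by
          rw [yseq_succ]
      _ = yseq S x μ hμ hfl i + x2 S x (hμ hij)
            + S.p (hμ hij) (x2 S x (hμ (Nat.le_succ j))) := by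
          rw [map_add, IH]
      _ = yseq S x μ hμ hfl i + x2 S x (hμ (hij.trans (Nat.le_succ j))) := by
          rw [add_assoc, ← cocyc S x hx (hμ hij) (hμ (Nat.le_succ j))]

lemma indep (hx : S.coboundary 1 x = 0) {a : Λ} {k m : ℕ} (hkm : k ≤ m)
    (hak : a ≤ μ k) (ham : a ≤ μ m) :
    S.p ham (yseq S x μ hμ hfl m) - x2 S x ham
      = S.p hak (yseq S x μ hμ hfl k) - x2 S x hak := by
  have h1 : S.p ham (yseq S x μ hμ hfl m)
      = S.p hak (yseq S x μ hμ hfl k) + S.p hak (x2 S x (hμ hkm)) := by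
    calc S.p ham (yseq S x μ hμ hfl m)
        = S.p hak (S.p (hμ hkm) (yseq S x μ hμ hfl m)) := (S.p_comp _ _ _).symm
      _ = S.p hak (yseq S x μ hμ hfl k + x2 S x (hμ hkm)) := by
          rw [yseq_proj S x μ hμ hfl hx hkm]
      _ = _ := map_add _ _ _
  have h2 : x2 S x ham = x2 S x hak + S.p hak (x2 S x (hμ hkm)) :=
    cocyc S x hx hak (hμ hkm)
  rw [h1, h2]; abel


noncomputable def ycochain (hcof : ∀ a : Λ, ∃ i : ℕ, a ≤ μ i) : S.Cochain 0 :=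
  fun t => S.p (hcof (t.1 0)).choose_spec (yseq S x μ hμ hfl (hcof (t.1 0)).choose)
    - x2 S x (hcof (t.1 0)).choose_spec

lemma ycochain_spec (hx : S.coboundary 1 x = 0) (hcof : ∀ a : Λ, ∃ i : ℕ, a ≤ μ i)
    (t : Tup Λ 0) (k : ℕ) (h : t.1 0 ≤ μ k) :
    ycochain S x μ hμ hfl hcof t = S.p h (yseq S x μ hμ hfl k) - x2 S x h := by
  unfold ycochain
  calc S.p (hcof (t.1 0)).choose_spec (yseq S x μ hμ hfl (hcof (t.1 0)).choose)
        - x2 S x (hcof (t.1 0)).choose_spec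
      = S.p ((hcof (t.1 0)).choose_spec.trans (hμ (le_max_left (hcof (t.1 0)).choose k)))
          (yseq S x μ hμ hfl (max (hcof (t.1 0)).choose k))
        - x2 S x ((hcof (t.1 0)).choose_spec.trans (hμ (le_max_left (hcof (t.1 0)).choose k))) :=
        (indep S x μ hμ hfl hx (le_max_left _ _) _ _).symm
    _ = S.p h (yseq S x μ hμ hfl k) - x2 S x h :=
        indep S x μ hμ hfl hx (le_max_right _ _) h
          (h.trans (hμ (le_max_right (hcof (t.1 0)).choose k)))

end Aux

/-!
Statement 1: If `G` is a flasque inverse system of abelian groups indexed by a directed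
set of countable cofinality, then `lim^1 G = 0`: every coherent element of `G^{(1)}`
is trivial.
-/
theorem lim_one_eq_zero_of_flasque_of_countable_cofinality
    [IsDirected Λ (· ≤ ·)] (S : InvSys.{u, v} Λ)
    (hflasque : ∀ {a b : Λ} (h : a ≤ b), Function.Surjective (S.p h))
    (μ : ℕ → Λ) (hμ : Monotone μ) (hcof : ∀ a : Λ, ∃ i : ℕ, a ≤ μ i)
    (x : S.Cochain 1) (hx : S.coboundary 1 x = 0) :
    ∃ y : S.Cochain 0, S.coboundary 0 y = x := by
  refine ⟨ycochain S x μ hμ hflasque hcof, ?_⟩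
  funext t
  have hab : t.1 0 ≤ t.1 1 := t.2 (by decide)
  have et : t = pairT hab := Subtype.ext (funext fun i => by fin_cases i <;> rfl)
  obtain ⟨k, hk⟩ := hcof (t.1 1)
  have ext : x t = x2 S x hab :=
    calc x t = S.p le_rfl (x t) := (S.p_refl _ _ _).symm
      _ = S.p (le_refl (t.1 0)) (x (pairT hab)) := px_congr S et _ _ x
      _ = x2 S x hab := S.p_refl _ _ _
  simp only [InvSys.coboundary, Fin.sum_univ_succ, Fin.sum_univ_zero, Fin.val_zero,
    pow_zero, one_smul, add_zero]
  rw [ycochain_spec S x μ hμ hflasque hx hcof (t.face 0) k hk,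
    ycochain_spec S x μ hμ hflasque hx hcof (t.face (Fin.succ 0)) k (hab.trans hk)]
  show S.p hab (S.p hk (yseq S x μ hμ hflasque k) - x2 S x hk)
      + (-1 : ℤ) ^ (1 : ℕ) • (S.p (le_refl (t.1 0)))
          (S.p (hab.trans hk) (yseq S x μ hμ hflasque k) - x2 S x (hab.trans hk))
    = x t
  rw [S.p_refl, map_sub, S.p_comp hab hk, ext, cocyc S x hx hab hk, pow_one, neg_smul,
    one_smul]
  abel
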